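/- Appendix C, Corollary 2(ii): let F be a qubit effect with Bloch vector y⃗ and y₀ = Re tr F, and let ρ be a qubit state with Bloch vector r⃗. If Re tr(Fρ) ≤ ε and y₀ ≥ 1 − ε for some ε ≥ 0, then the Euclidean norm ‖y⃗ + r⃗‖ ≤ √(4ε + ε²). -/

import Mathlib

open Matrix
open scoped ComplexOrder

/-- A qubit state: a positive semidefinite 2×2 complex matrix with trace 1. -/
def QubitState (ρ : Matrix (Fin 2) (Fin 2) ℂ) : Prop :=
  ρ.PosSemidef ∧ ρ.trace = 1

/-- A qubit effect: a 2×2 complex matrix `E` with both `E` and `1 - E` positive semidefinite. -/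
def QubitEffect (E : Matrix (Fin 2) (Fin 2) ℂ) : Prop :=
  E.PosSemidef ∧ (1 - E).PosSemidef

/-- A realization of a 3×3 correlation matrix `P` by three qubit states, a three-outcome
qubit POVM `(M11, M21, M31)` and a two-outcome qubit POVM `(M12, M22)`. -/
def IsRealization (P : Matrix (Fin 3) (Fin 3) ℝ)
    (ρ : Fin 3 → Matrix (Fin 2) (Fin 2) ℂ)
    (M11 M21 M31 M12 M22 : Matrix (Fin 2) (Fin 2) ℂ) : Prop :=
  (∀ x, QubitState (ρ x)) ∧
  QubitEffect M11 ∧ QubitEffect M21 ∧ QubitEffect M31 ∧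
  M11 + M21 + M31 = 1 ∧
  QubitEffect M12 ∧ QubitEffect M22 ∧
  M12 + M22 = 1 ∧
  (∀ x, P x 0 = ((ρ x * M11).trace).re ∧
        P x 1 = ((ρ x * M21).trace).re ∧
        P x 2 = ((ρ x * M12).trace).re)

/-- The USD pattern of zeros and ones of the correlation matrix, Eq. (3). -/
def USDpattern (P : Matrix (Fin 3) (Fin 3) ℝ) : Prop :=
  P 0 2 = 0 ∧ P 1 1 = 0 ∧ P 1 2 = 1 ∧ P 2 0 = 0

/-- The set USD₂ of qubit USD correlations. -/
def USD2 (P : Matrix (Fin 3) (Fin 3) ℝ) : Prop :=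
  USDpattern P ∧
  ∃ ρ M11 M21 M31 M12 M22, IsRealization P ρ M11 M21 M31 M12 M22

/-- A three-outcome qubit POVM is simulable by dichotomic measurements, Eq. (1). -/
def Simulable (M11 M21 M31 : Matrix (Fin 2) (Fin 2) ℂ) : Prop :=
  ∃ p1 p2 p3 : ℝ, ∃ N11 N22 N13 : Matrix (Fin 2) (Fin 2) ℂ,
    0 ≤ p1 ∧ 0 ≤ p2 ∧ 0 ≤ p3 ∧ p1 + p2 + p3 = 1 ∧
    QubitEffect N11 ∧ QubitEffect N22 ∧ QubitEffect N13 ∧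
    M11 = p1 • N11 + p3 • N13 ∧
    M21 = p1 • (1 - N11) + p2 • N22 ∧
    M31 = p2 • (1 - N22) + p3 • (1 - N13)

/-- The set SIM₂ of simulable trichotomic qubit correlations in the minimal scenario. -/
def SIM2 (P : Matrix (Fin 3) (Fin 3) ℝ) : Prop :=
  ∃ ρ M11 M21 M31 M12 M22, IsRealization P ρ M11 M21 M31 M12 M22 ∧
    Simulable M11 M21 M31

/-- The parameterized USD correlation matrix 𝒫(p, q, ξ) of Eq. (4). -/
noncomputable def Pmat (p q ξ : ℝ) : Matrix (Fin 3) (Fin 3) ℝ :=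
  !![p * ξ,       q,           0;
     p * (1 - ξ), 0,           1;
     0,           q * (1 - ξ), ξ]

/-- The three Pauli matrices. -/
noncomputable def pauli : Fin 3 → Matrix (Fin 2) (Fin 2) ℂ :=
  ![!![0, 1; 1, 0], !![0, -Complex.I; Complex.I, 0], !![1, 0; 0, -1]]

/-- The Bloch vector of a 2×2 complex matrix: `(Re tr(A σ₁), Re tr(A σ₂), Re tr(A σ₃))`. -/
noncomputable def bloch (A : Matrix (Fin 2) (Fin 2) ℂ) : Fin 3 → ℝ :=
  fun i => ((A * pauli i).trace).re

/-- Appendix C, Corollary 2(ii): if `Re tr(Fρ) ≤ ε` and `Re tr F ≥ 1 - ε`, then the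
Euclidean norm of the sum of the Bloch vectors of `F` and `ρ` is at most `√(4ε + ε²)`. -/

lemma herm_im_zero {z : ℂ} (h : star z = z) : z.im = 0 := by
  have := congrArg Complex.im h
  simp [Complex.star_def, Complex.conj_im] at this
  linarith

lemma psd2_entries (A : Matrix (Fin 2) (Fin 2) ℂ) (h : A.PosSemidef) :
    (A 0 0).im = 0 ∧ (A 1 1).im = 0 ∧ 0 ≤ (A 0 0).re ∧ 0 ≤ (A 1 1).re ∧
    (A 1 0).re = (A 0 1).re ∧ (A 1 0).im = -(A 0 1).im ∧
    (A 0 1).re ^ 2 + (A 0 1).im ^ 2 ≤ (A 0 0).re * (A 1 1).re := by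
  have herm := h.1.apply 1 0
  have him0 : (A 0 0).im = 0 := herm_im_zero (h.1.apply 0 0)
  have him1 : (A 1 1).im = 0 := herm_im_zero (h.1.apply 1 1)
  have hre10 : (A 1 0).re = (A 0 1).re := by
    have := congrArg Complex.re herm; simpa [Complex.star_def] using this.symm
  have him10 : (A 1 0).im = -(A 0 1).im := by
    have := congrArg Complex.im herm; simpa [Complex.star_def] using this.symm
  -- quadratic form values
  have q0 : 0 ≤ (A 0 0).re := by
    have := h.dotProduct_mulVec_nonneg ![1, 0]
    rw [Complex.le_def] at this
    simpa [dotProduct, mulVec, Fin.sum_univ_two] using this.1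
  have q1 : 0 ≤ (A 1 1).re := by
    have := h.dotProduct_mulVec_nonneg ![0, 1]
    rw [Complex.le_def] at this
    simpa [dotProduct, mulVec, Fin.sum_univ_two] using this.1
  refine ⟨him0, him1, q0, q1, hre10, him10, ?_⟩
  set a := (A 0 0).re
  set d := (A 1 1).re
  set m := (A 0 1).re ^ 2 + (A 0 1).im ^ 2
  have hm0 : 0 ≤ m := by positivity
  have key : ∀ t : ℝ, 0 ≤ a * m * t ^ 2 - 2 * m * t + d := by
    intro t
    have := h.dotProduct_mulVec_nonneg ![(t : ℂ) * A 0 1, -1]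
    rw [Complex.le_def] at this
    have h1 := this.1
    simp only [dotProduct, mulVec, Fin.sum_univ_two, Matrix.cons_val_zero,
      Matrix.cons_val_one, Matrix.head_cons, Pi.star_apply, star_mul', star_neg, star_one,
      Complex.star_def] at h1
    have e : ((starRingEnd ℂ) (↑t * A 0 1) * (A 0 0 * (↑t * A 0 1) + A 0 1 * -1) +
        (starRingEnd ℂ) (-1) * (A 1 0 * (↑t * A 0 1) + A 1 1 * -1)).re = a * m * t ^ 2 - 2 * m * t + d := by
      simp [Complex.mul_re, Complex.add_re, Complex.mul_im, Complex.add_im, Complex.conj_re,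
        Complex.conj_im, Complex.ofReal_re, Complex.ofReal_im, him0, him1, hre10, him10]
      ring
    rw [e] at h1
    simpa using h1
  by_cases ha : a = 0
  · rcases eq_or_lt_of_le hm0 with hm | hm
    · nlinarith
    · exfalso
      have := key ((d + 1) / (2 * m))
      rw [ha] at this
      have h2 : 2 * m * ((d + 1) / (2 * m)) = d + 1 := by field_simp
      nlinarith [this]
  · have ha' : 0 < a := lt_of_le_of_ne q0 (Ne.symm ha)
    have := key (1 / a)
    have h2 : a * m * (1/a)^2 = m / a := by field_simp
    have h3 : 2 * m * (1/a) = 2 * m / a := by ring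
    rw [h2, h3] at this
    have h5 : m / a - 2 * m / a = -(m / a) := by ring
    have : m / a ≤ d := by linarith
    calc m = a * (m / a) := by field_simp
    _ ≤ a * d := by nlinarith


lemma key_real_ineq (a d b c p s u v ε : ℝ) (hε : 0 ≤ ε)
    (hdetF : b^2+c^2 ≤ a*d) (hdetF' : b^2+c^2 ≤ (1-a)*(1-d)) (hdetρ : u^2+v^2 ≤ p*s)
    (hps : p + s = 1) (ha1 : a ≤ 1) (hd1 : d ≤ 1)
    (hprob' : a*p + d*s + 2*(b*u+c*v) ≤ ε) (hy0' : 1 - ε ≤ a + d) :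
    (2*b + 2*u)^2 + (-2*c + -2*v)^2 + (a - d + (p - s))^2 ≤ 4*ε + ε^2 := by
  by_cases hcase : a + d ≤ 1
  · nlinarith [mul_nonneg (by linarith : (0:ℝ) ≤ ε - (1 - (a + d)))
        (by linarith : (0:ℝ) ≤ ε + (1 - (a + d))), hdetF, hdetρ, hprob', hps]
  · nlinarith [mul_nonneg (by linarith : (0:ℝ) ≤ a + d - 1) (by linarith : (0:ℝ) ≤ 5 - (a + d)),
        hdetF', hdetρ, hprob', hps, sq_nonneg ε]

theorem bloch_anti_close_of_low_prob (F ρ : Matrix (Fin 2) (Fin 2) ℂ)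
    (hF : QubitEffect F) (hρ : QubitState ρ) (ε : ℝ) (hε : 0 ≤ ε)
    (hprob : ((F * ρ).trace).re ≤ ε) (hy0 : (F.trace).re ≥ 1 - ε) :
    Real.sqrt (∑ i, (bloch F i + bloch ρ i) ^ 2) ≤ Real.sqrt (4 * ε + ε ^ 2) := by
  obtain ⟨fim0, fim1, ha0, hd0, fre10, fim10, hdetF⟩ := psd2_entries F hF.1
  obtain ⟨_, _, _, _, _, _, hdetF'⟩ := psd2_entries (1 - F) hF.2
  obtain ⟨rim0, rim1, hp0, hs0, rre10, rim10, hdetρ⟩ := psd2_entries ρ hρ.1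
  set a := (F 0 0).re with hadef
  set d := (F 1 1).re with hddef
  set b := (F 0 1).re with hbdef
  set c := (F 0 1).im with hcdef
  set p := (ρ 0 0).re with hpdef
  set s := (ρ 1 1).re with hsdef
  set u := (ρ 0 1).re with hudef
  set v := (ρ 0 1).im with hvdef
  -- translate the (1-F) facts
  have e00 : (1 - F) 0 0 = 1 - F 0 0 := by simp [Matrix.sub_apply, Matrix.one_apply]
  have e11 : (1 - F) 1 1 = 1 - F 1 1 := by simp [Matrix.sub_apply, Matrix.one_apply]
  have e01 : (1 - F) 0 1 = - F 0 1 := by simp [Matrix.sub_apply, Matrix.one_apply]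
  rw [e00, e11, e01] at hdetF'
  simp only [Complex.sub_re, Complex.one_re, Complex.neg_re, Complex.neg_im] at hdetF'
  have hdetF' : b ^ 2 + c ^ 2 ≤ (1 - a) * (1 - d) := by
    calc b ^ 2 + c ^ 2 = (-b) ^ 2 + (-c) ^ 2 := by ring
    _ ≤ (1 - a) * (1 - d) := hdetF'
  have ha1 : a ≤ 1 := by
    have := (psd2_entries (1 - F) hF.2).2.2.1
    rw [e00] at this; simp only [Complex.sub_re, Complex.one_re] at this; linarith
  have hd1 : d ≤ 1 := by
    have := (psd2_entries (1 - F) hF.2).2.2.2.1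
    rw [e11] at this; simp only [Complex.sub_re, Complex.one_re] at this; linarith
  -- trace of ρ
  have hps : p + s = 1 := by
    have := congrArg Complex.re hρ.2
    simpa [Matrix.trace, Fin.sum_univ_two, Matrix.diag, Complex.add_re] using this
  -- probability
  have hprob' : a * p + d * s + 2 * (b * u + c * v) ≤ ε := by
    have e : ((F * ρ).trace).re = (F 0 0).re * (ρ 0 0).re - (F 0 0).im * (ρ 0 0).im
        + ((F 0 1).re * (ρ 1 0).re - (F 0 1).im * (ρ 1 0).im)
        + ((F 1 0).re * (ρ 0 1).re - (F 1 0).im * (ρ 0 1).im)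
        + ((F 1 1).re * (ρ 1 1).re - (F 1 1).im * (ρ 1 1).im) := by
      simp [Matrix.trace, Matrix.mul_apply, Fin.sum_univ_two, Matrix.diag, Complex.add_re,
        Complex.mul_re]
      ring
    rw [e, fim0, fim1, rim0, rim1, fre10, fim10, rre10, rim10] at hprob
    simp only [← hadef, ← hbdef, ← hcdef, ← hddef, ← hpdef, ← hsdef, ← hudef, ← hvdef] at hprob
    linarith [hprob]
  -- y0
  have hy0' : 1 - ε ≤ a + d := by
    have e : (F.trace).re = a + d := by
      simp [Matrix.trace, Fin.sum_univ_two, Matrix.diag, Complex.add_re]; rfl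
    rw [e] at hy0; linarith
  -- Bloch components
  have bF0 : bloch F 0 = 2 * b := by
    simp [bloch, pauli, Matrix.trace, Matrix.mul_apply, Fin.sum_univ_two, Matrix.diag,
      Complex.add_re, Complex.mul_re, fre10, ← hbdef]
    ring
  have bF1 : bloch F 1 = -2 * c := by
    simp [bloch, pauli, Matrix.trace, Matrix.mul_apply, Fin.sum_univ_two, Matrix.diag,
      Complex.add_re, Complex.mul_re, fim10, ← hcdef]
    ring
  have bF2 : bloch F 2 = a - d := by
    simp [bloch, pauli, Matrix.trace, Matrix.mul_apply, Fin.sum_univ_two, Matrix.diag,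
      Complex.add_re, Complex.mul_re, ← hadef, ← hddef]
    ring
  have bρ0 : bloch ρ 0 = 2 * u := by
    simp [bloch, pauli, Matrix.trace, Matrix.mul_apply, Fin.sum_univ_two, Matrix.diag,
      Complex.add_re, Complex.mul_re, rre10, ← hudef]
    ring
  have bρ1 : bloch ρ 1 = -2 * v := by
    simp [bloch, pauli, Matrix.trace, Matrix.mul_apply, Fin.sum_univ_two, Matrix.diag,
      Complex.add_re, Complex.mul_re, rim10, ← hvdef]
    ring
  have bρ2 : bloch ρ 2 = p - s := by
    simp [bloch, pauli, Matrix.trace, Matrix.mul_apply, Fin.sum_univ_two, Matrix.diag,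
      Complex.add_re, Complex.mul_re, ← hpdef, ← hsdef]
    ring
  apply Real.sqrt_le_sqrt
  rw [Fin.sum_univ_three, bF0, bF1, bF2, bρ0, bρ1, bρ2]
  exact key_real_ineq a d b c p s u v ε hε hdetF hdetF' hdetρ hps ha1 hd1 hprob' hy0'
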